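/- Let G be a graph and H an attachment set of odd size h. Then η(altan(G,H)) = η(G). -/

import Mathlib

open scoped Classical

/-- The nullity of a graph: dimension of the kernel of its real adjacency matrix. -/
noncomputable def nullity {V : Type*} [Fintype V] (G : SimpleGraph V) : ℕ :=
  letI := Classical.decEq V
  letI := Classical.decRel G.Adj
  Module.finrank ℝ ↥(LinearMap.ker (Matrix.toLin' (G.adjMatrix ℝ)))

/-- `q` is a kernel eigenvector of `G`: the sum of `q` over each neighbourhood is `0`. -/
def IsKernelVector {V : Type*} [Fintype V] (G : SimpleGraph V) (q : V → ℝ) : Prop :=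
  ∀ v : V, ∑ u : V, (if G.Adj v u then q u else 0) = 0

/-- Underlying relation of the altan construction: vertices are `V ⊕ (Fin h ⊕ Fin h)`,
where `Sum.inr (Sum.inl i)` is `x_{i+1}` and `Sum.inr (Sum.inr i)` is `y_{i+1}`
(0-indexed versions of the 1-indexed `x_i, y_i`). -/
def altanRel {V : Type*} {h : ℕ} [NeZero h] (G : SimpleGraph V) (H : Fin h → V) :
    (V ⊕ (Fin h ⊕ Fin h)) → (V ⊕ (Fin h ⊕ Fin h)) → Prop
  | Sum.inl u, Sum.inl w => G.Adj u w
  | Sum.inl u, Sum.inr (Sum.inl i) => u = H i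
  | Sum.inr (Sum.inl i), Sum.inr (Sum.inr j) => j = i ∨ i = j + 1
  | _, _ => False

/-- The altan of `(G, H)`. -/
def altan {V : Type*} {h : ℕ} [NeZero h] (G : SimpleGraph V) (H : Fin h → V) :
    SimpleGraph (V ⊕ (Fin h ⊕ Fin h)) :=
  SimpleGraph.fromRel (altanRel G H)

/-- The special vector: `s(y_i) = (-1)^i` (1-indexed), `0` elsewhere. -/
def specialVector (V : Type*) (h : ℕ) : (V ⊕ (Fin h ⊕ Fin h)) → ℝ
  | Sum.inr (Sum.inr j) => (-1 : ℝ) ^ ((j : ℕ) + 1)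
  | _ => 0

/-- The induced attachment set `H' = (y_1, ..., y_h)` of the altan. -/
def inducedAttachment (V : Type*) (h : ℕ) : Fin h → (V ⊕ (Fin h ⊕ Fin h)) :=
  fun i => Sum.inr (Sum.inr i)

open scoped Fin.NatCast Fin.CommRing

namespace AltanNullityAux

section Adj
variable {V : Type*} {h : ℕ} [NeZero h] (G : SimpleGraph V) (H : Fin h → V)

lemma adj_inl_inl (v w : V) :
    (altan G H).Adj (Sum.inl v) (Sum.inl w) ↔ G.Adj v w := by
  constructor
  · rintro ⟨-, h1 | h1⟩
    · exact h1
    · exact h1.symm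
  · intro hvw; exact ⟨by simpa using hvw.ne, Or.inl hvw⟩

lemma adj_inl_x (v : V) (i : Fin h) :
    (altan G H).Adj (Sum.inl v) (Sum.inr (Sum.inl i)) ↔ v = H i := by
  constructor
  · rintro ⟨-, h1 | h1⟩
    · exact h1
    · exact h1.elim
  · intro e; exact ⟨by simp, Or.inl e⟩

lemma adj_x_inl (v : V) (i : Fin h) :
    (altan G H).Adj (Sum.inr (Sum.inl i)) (Sum.inl v) ↔ v = H i := by
  rw [(altan G H).adj_comm]; exact adj_inl_x G H v i

lemma adj_inl_y (v : V) (j : Fin h) :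
    ¬ (altan G H).Adj (Sum.inl v) (Sum.inr (Sum.inr j)) := by
  rintro ⟨-, h1 | h1⟩ <;> exact h1

lemma adj_y_inl (v : V) (j : Fin h) :
    ¬ (altan G H).Adj (Sum.inr (Sum.inr j)) (Sum.inl v) := by
  intro a
  exact adj_inl_y G H v j a.symm

lemma adj_x_x (i i' : Fin h) :
    ¬ (altan G H).Adj (Sum.inr (Sum.inl i)) (Sum.inr (Sum.inl i')) := by
  rintro ⟨-, h1 | h1⟩ <;> exact h1

lemma adj_y_y (j j' : Fin h) :
    ¬ (altan G H).Adj (Sum.inr (Sum.inr j)) (Sum.inr (Sum.inr j')) := by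
  rintro ⟨-, h1 | h1⟩ <;> exact h1

lemma adj_x_y (i j : Fin h) :
    (altan G H).Adj (Sum.inr (Sum.inl i)) (Sum.inr (Sum.inr j)) ↔ (j = i ∨ i = j + 1) := by
  constructor
  · rintro ⟨-, h1 | h1⟩
    · exact h1
    · exact h1.elim
  · intro e; exact ⟨by simp, Or.inl e⟩

lemma adj_y_x (i j : Fin h) :
    (altan G H).Adj (Sum.inr (Sum.inr j)) (Sum.inr (Sum.inl i)) ↔ (j = i ∨ i = j + 1) := by
  rw [(altan G H).adj_comm]; exact adj_x_y G H i j

end Adj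

section FinFacts
variable {h : ℕ} [NeZero h]

lemma sub_one_ne (hh : 2 ≤ h) (i : Fin h) : i - 1 ≠ i := by
  intro e
  have h1 := sub_eq_self.mp e
  have : ((1 : Fin h) : ℕ) = ((0 : Fin h) : ℕ) := by rw [h1]
  rw [Fin.val_one', Fin.val_zero, Nat.mod_eq_of_lt (by omega)] at this
  omega

lemma add_one_ne (hh : 2 ≤ h) (j : Fin h) : j + 1 ≠ j := by
  intro e
  have h1 : (1 : Fin h) = 0 := by
    calc (1 : Fin h) = j + 1 - j := by ring
    _ = 0 := by rw [e]; ring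
  have : ((1 : Fin h) : ℕ) = ((0 : Fin h) : ℕ) := by rw [h1]
  rw [Fin.val_one', Fin.val_zero, Nat.mod_eq_of_lt (by omega)] at this
  omega

lemma sum_pair_sub (hh : 2 ≤ h) (i : Fin h) (b : Fin h → ℝ) :
    ∑ j : Fin h, (if (j = i ∨ i = j + 1) then b j else 0) = b i + b (i - 1) := by
  have hne : i - 1 ≠ i := sub_one_ne hh i
  have hne1 : h ≠ 1 := by omega
  have cond : ∀ j : Fin h, (j = i ∨ i = j + 1) ↔ (j = i ∨ j = i - 1) := by
    intro j
    constructor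
    · rintro (rfl | e)
      · exact Or.inl rfl
      · right; rw [e]; ring
    · rintro (rfl | rfl)
      · exact Or.inl rfl
      · right; ring
  have split : ∀ j : Fin h, (if (j = i ∨ i = j + 1) then b j else 0)
      = (if j = i then b j else 0) + (if j = i - 1 then b j else 0) := by
    intro j
    rw [if_congr (cond j) rfl rfl]
    by_cases h1 : j = i <;> by_cases h2 : j = i - 1
    · subst h1; exact absurd h2.symm hne
    · simp [h1, h2, Ne.symm hne, hne1]
    · simp [h1, h2, Ne.symm hne, hne1]
    · simp [h1, h2, Ne.symm hne, hne1]
  rw [Finset.sum_congr rfl (fun j _ => split j), Finset.sum_add_distrib]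
  simp

lemma sum_pair_add (hh : 2 ≤ h) (j : Fin h) (a : Fin h → ℝ) :
    ∑ i : Fin h, (if (j = i ∨ i = j + 1) then a i else 0) = a j + a (j + 1) := by
  have hne : j + 1 ≠ j := add_one_ne hh j
  have hne1 : h ≠ 1 := by omega
  have cond : ∀ i : Fin h, (j = i ∨ i = j + 1) ↔ (i = j ∨ i = j + 1) := by
    intro i
    constructor
    · rintro (rfl | rfl)
      · exact Or.inl rfl
      · exact Or.inr rfl
    · rintro (rfl | rfl)
      · exact Or.inl rfl
      · exact Or.inr rfl
  have split : ∀ i : Fin h, (if (j = i ∨ i = j + 1) then a i else 0)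
      = (if i = j then a i else 0) + (if i = j + 1 then a i else 0) := by
    intro i
    rw [if_congr (cond i) rfl rfl]
    by_cases h1 : i = j <;> by_cases h2 : i = j + 1
    · subst h1; exact absurd h2.symm hne
    · simp [h1, h2, Ne.symm hne, hne1]
    · simp [h1, h2, Ne.symm hne, hne1]
    · simp [h1, h2, Ne.symm hne, hne1]
  rw [Finset.sum_congr rfl (fun i _ => split i), Finset.sum_add_distrib]
  simp

lemma alt_eq_zero (hodd : Odd h) (a : Fin h → ℝ)
    (ha : ∀ i, a i + a (i + 1) = 0) : ∀ i, a i = 0 := by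
  have key : ∀ n : ℕ, a (n : Fin h) = (-1 : ℝ) ^ n * a 0 := by
    intro n
    induction n with
    | zero => simp
    | succ n ih =>
      have e1 : ((n + 1 : ℕ) : Fin h) = (n : Fin h) + 1 := by push_cast; ring
      have e2 := ha (n : Fin h)
      rw [e1]
      have : a ((n : Fin h) + 1) = -a (n : Fin h) := by linarith
      rw [this, ih]; ring
  have h0 : a 0 = 0 := by
    have := key h
    rw [Fin.natCast_self, hodd.neg_one_pow] at this
    linarith
  intro i
  have := key i.val
  rw [Fin.cast_val_eq_self] at this
  rw [this, h0, mul_zero]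

end FinFacts

/-- Kernel membership for an adjacency matrix, as row equations. -/
lemma mem_ker_iff {W : Type*} [Fintype W] [DecidableEq W] (G' : SimpleGraph W)
    [DecidableRel G'.Adj] (f : W → ℝ) :
    f ∈ LinearMap.ker (Matrix.toLin' (G'.adjMatrix ℝ)) ↔
      ∀ w, ∑ u, (if G'.Adj w u then f u else 0) = 0 := by
  simp only [LinearMap.mem_ker, Matrix.toLin'_apply, funext_iff, Pi.zero_apply]
  refine forall_congr' fun w => ?_
  simp [Matrix.mulVec, dotProduct, SimpleGraph.adjMatrix_apply, ite_mul]

section Main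
variable {V : Type*} [Fintype V] {h : ℕ} [NeZero h]

/-- The explicit solution of the recurrence `b i + b (i-1) = -q (H i)`. -/
noncomputable def Bvec (q : V → ℝ) (H : Fin h → V) (i : Fin h) : ℝ :=
  (-(1:ℝ)/2) * ∑ k ∈ Finset.range h, (-1:ℝ)^k * q (H (i - (k : Fin h)))

lemma Bvec_add (hodd : Odd h) (q : V → ℝ) (H : Fin h → V)
    (i : Fin h) : Bvec q H i + Bvec q H (i - 1) = -q (H i) := by
  set F : ℕ → ℝ := fun m => (-1:ℝ)^m * q (H (i - (m : Fin h))) with hF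
  have hshift : ∑ k ∈ Finset.range h, F (k + 1)
      = (∑ k ∈ Finset.range h, F k) + F h - F 0 := by
    linarith [Finset.sum_range_succ' F h, Finset.sum_range_succ F h]
  have hS' : ∑ k ∈ Finset.range h, (-1:ℝ)^k * q (H (i - 1 - (k : Fin h)))
      = -((∑ k ∈ Finset.range h, F k) + F h - F 0) := by
    have step : ∀ k : ℕ, (-1:ℝ)^k * q (H (i - 1 - (k : Fin h))) = -(F (k+1)) := by
      intro k
      have e1 : i - 1 - (k : Fin h) = i - ((k+1 : ℕ) : Fin h) := by push_cast; ring
      simp only [hF, e1, pow_succ]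
      ring
    rw [Finset.sum_congr rfl (fun k _ => step k), Finset.sum_neg_distrib, hshift]
  have hFh : F h = -q (H i) := by
    simp only [hF]
    rw [Fin.natCast_self, hodd.neg_one_pow, sub_zero]
    ring
  have hF0 : F 0 = q (H i) := by simp [hF]
  simp only [Bvec]
  rw [hS']
  have : ∑ k ∈ Finset.range h, (-1:ℝ)^k * q (H (i - (k : Fin h)))
      = ∑ k ∈ Finset.range h, F k := rfl
  rw [this, hFh, hF0]
  ring

variable (G : SimpleGraph V) (H : Fin h → V)

/-- The kernel of the altan's adjacency matrix, characterized by its three families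
of row equations. -/
lemma ker_altan_iff (hh : 2 ≤ h)
    [DecidableEq (V ⊕ (Fin h ⊕ Fin h))] [DecidableRel (altan G H).Adj]
    [DecidableEq V] [DecidableRel G.Adj]
    (f : (V ⊕ (Fin h ⊕ Fin h)) → ℝ) :
    f ∈ LinearMap.ker (Matrix.toLin' ((altan G H).adjMatrix ℝ)) ↔
      ((∀ v, (∑ w, if G.Adj v w then f (Sum.inl w) else 0)
             + ∑ i : Fin h, (if v = H i then f (Sum.inr (Sum.inl i)) else 0) = 0)
       ∧ (∀ i : Fin h, f (Sum.inl (H i))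
             + (f (Sum.inr (Sum.inr i)) + f (Sum.inr (Sum.inr (i - 1)))) = 0)
       ∧ (∀ j : Fin h, f (Sum.inr (Sum.inl j)) + f (Sum.inr (Sum.inl (j + 1))) = 0)) := by
  rw [mem_ker_iff]
  rw [Sum.forall]
  constructor
  · rintro ⟨e1, e2⟩
    rw [Sum.forall] at e2
    obtain ⟨e2, e3⟩ := e2
    refine ⟨fun v => ?_, fun i => ?_, fun j => ?_⟩
    · have := e1 v
      rw [Fintype.sum_sum_type, Fintype.sum_sum_type] at this
      simp only [adj_inl_inl, adj_inl_x, adj_inl_y, if_false] at this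
      simpa using this
    · have := e2 i
      rw [Fintype.sum_sum_type, Fintype.sum_sum_type] at this
      simp only [adj_x_inl, adj_x_x, adj_x_y, if_false] at this
      simp only [Finset.sum_const_zero, zero_add, add_zero] at this
      rw [Finset.sum_ite_eq' Finset.univ (H i) (fun v => f (Sum.inl v))] at this
      rw [sum_pair_sub hh i (fun j => f (Sum.inr (Sum.inr j)))] at this
      simpa using this
    · have := e3 j
      rw [Fintype.sum_sum_type, Fintype.sum_sum_type] at this
      simp only [adj_y_inl, adj_y_y, adj_y_x, if_false] at this
      simp only [Finset.sum_const_zero, zero_add, add_zero] at this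
      rw [sum_pair_add hh j (fun i => f (Sum.inr (Sum.inl i)))] at this
      simpa using this
  · rintro ⟨e1, e2, e3⟩
    refine ⟨fun v => ?_, ?_⟩
    · rw [Fintype.sum_sum_type, Fintype.sum_sum_type]
      simp only [adj_inl_inl, adj_inl_x, adj_inl_y, if_false]
      simpa using e1 v
    · rw [Sum.forall]
      constructor
      · intro i
        rw [Fintype.sum_sum_type, Fintype.sum_sum_type]
        simp only [adj_x_inl, adj_x_x, adj_x_y, if_false]
        simp only [Finset.sum_const_zero, zero_add, add_zero]
        rw [Finset.sum_ite_eq' Finset.univ (H i) (fun v => f (Sum.inl v))]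
        rw [sum_pair_sub hh i (fun j => f (Sum.inr (Sum.inr j)))]
        simpa using e2 i
      · intro j
        rw [Fintype.sum_sum_type, Fintype.sum_sum_type]
        simp only [adj_y_inl, adj_y_y, adj_y_x, if_false]
        simp only [Finset.sum_const_zero, zero_add, add_zero]
        rw [sum_pair_add hh j (fun i => f (Sum.inr (Sum.inl i)))]
        simpa using e3 j

lemma finrank_key (hh : 2 ≤ h) (hodd : Odd h)
    [DecidableEq (V ⊕ (Fin h ⊕ Fin h))] [DecidableRel (altan G H).Adj]
    [DecidableEq V] [DecidableRel G.Adj] :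
    Module.finrank ℝ ↥(LinearMap.ker (Matrix.toLin' ((altan G H).adjMatrix ℝ)))
      = Module.finrank ℝ ↥(LinearMap.ker (Matrix.toLin' (G.adjMatrix ℝ))) := by
  set KA := LinearMap.ker (Matrix.toLin' ((altan G H).adjMatrix ℝ)) with hKA
  set KG := LinearMap.ker (Matrix.toLin' (G.adjMatrix ℝ)) with hKG
  have hmem : ∀ f : KA, (LinearMap.funLeft ℝ ℝ Sum.inl).comp KA.subtype f ∈ KG := by
    rintro ⟨f, hf⟩
    obtain ⟨E1, E2, E3⟩ := (ker_altan_iff G H hh f).mp hf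
    have ha : ∀ i : Fin h, f (Sum.inr (Sum.inl i)) = 0 :=
      alt_eq_zero hodd (fun i => f (Sum.inr (Sum.inl i))) E3
    rw [hKG, mem_ker_iff]
    intro v
    have := E1 v
    simp only [ha, if_pos, if_neg, ite_self, Finset.sum_const_zero, add_zero] at this
    simpa using this
  let φ : KA →ₗ[ℝ] KG :=
    LinearMap.codRestrict KG ((LinearMap.funLeft ℝ ℝ Sum.inl).comp KA.subtype) hmem
  have hinj : Function.Injective φ := by
    rw [injective_iff_map_eq_zero]
    rintro ⟨f, hf⟩ hf0
    have hq : ∀ v, f (Sum.inl v) = 0 := by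
      intro v
      have := congrFun (congrArg (fun (z : KG) => (z : V → ℝ)) hf0) v
      simpa [φ, LinearMap.funLeft] using this
    obtain ⟨E1, E2, E3⟩ := (ker_altan_iff G H hh f).mp hf
    have ha : ∀ i : Fin h, f (Sum.inr (Sum.inl i)) = 0 :=
      alt_eq_zero hodd (fun i => f (Sum.inr (Sum.inl i))) E3
    have hb : ∀ j : Fin h, f (Sum.inr (Sum.inr j)) = 0 := by
      refine alt_eq_zero hodd (fun j => f (Sum.inr (Sum.inr j))) ?_
      intro j
      have := E2 (j + 1)
      rw [hq (H (j + 1))] at this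
      have e : j + 1 - 1 = j := by ring
      rw [e] at this
      linarith
    apply Subtype.ext
    funext u
    rcases u with v | (i | j)
    · exact hq v
    · exact ha i
    · exact hb j
  have hsurj : Function.Surjective φ := by
    rintro ⟨q, hq⟩
    set f : (V ⊕ (Fin h ⊕ Fin h)) → ℝ :=
      Sum.elim q (Sum.elim (fun _ => 0) (Bvec q H)) with hfdef
    have hfKA : f ∈ KA := by
      rw [hKA, ker_altan_iff G H hh f]
      refine ⟨fun v => ?_, fun i => ?_, fun j => ?_⟩
      · have h2 : ∑ i : Fin h, (if v = H i then f (Sum.inr (Sum.inl i)) else 0) = 0 := by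
          simp [hfdef]
        rw [h2, add_zero]
        have := (mem_ker_iff G q).mp hq v
        simpa [hfdef] using this
      · have := Bvec_add hodd q H i
        simp only [hfdef, Sum.elim_inl, Sum.elim_inr]
        linarith
      · simp [hfdef]
    refine ⟨⟨f, hfKA⟩, ?_⟩
    apply Subtype.ext
    funext v
    rfl
  exact LinearEquiv.finrank_eq (LinearEquiv.ofBijective φ ⟨hinj, hsurj⟩)

end Main

end AltanNullityAux

/-- for odd attachment size, the altan has the same nullity as the parent. -/
theorem stmt2 {V : Type*} [Fintype V] {h : ℕ} [NeZero h] (hh : 2 ≤ h) (hodd : Odd h)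
    (G : SimpleGraph V) (H : Fin h → V) :
    nullity (altan G H) = nullity G := by
  unfold nullity
  exact AltanNullityAux.finrank_key G H hh hodd
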